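/- Let λ be the uniform (normalized Lebesgue) probability measure on [0, 2π]. Then the concept class 𝒮 = {C_w : w ∈ ℝ}, where C_w = {x ∈ ℝ : cos(wx) ≥ 0}, is not totally bounded in L¹(λ), and 𝒮 is not PAC learnable under λ: there exist no natural number m and learning rule L with sample size m that is PAC for 𝒮 under λ to accuracy 1/5 with confidence 3/4. -/

import Mathlib

open MeasureTheory Filter

/-- The `n`-fold product (i.i.d.) measure on `Fin n → Ω`. -/
noncomputable def prodMeas {Ω : Type*} [MeasurableSpace Ω] (μ : Measure Ω) (n : ℕ) :
    Measure (Fin n → Ω) := Measure.pi fun _ => μ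

/-- The sample `x` labeled by the concept `C`. -/
noncomputable def labeled {Ω : Type*} (C : Set Ω) {m : ℕ} (x : Fin m → Ω) :
    Fin m → Ω × Bool := fun i => (x i, @decide (x i ∈ C) (Classical.propDecidable _))

/-- `L` is PAC for `𝒞` under `μ` to accuracy `ε` with confidence `1 - δ`. -/
def IsPAC {Ω : Type*} [MeasurableSpace Ω] (μ : Measure Ω) (𝒞 : Set (Set Ω)) (m : ℕ)
    (L : (Fin m → Ω × Bool) → Set Ω) (ε δ : ℝ) : Prop :=
  ∀ C ∈ 𝒞, prodMeas μ m
    {x | ε < (μ (symmDiff (L (labeled C x)) C)).toReal} ≤ ENNReal.ofReal δ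

/-- The concept class realized by Sontag's network: `C_w = {x | cos (w x) ≥ 0}`. -/
def sontag : Set (Set ℝ) := {C | ∃ w : ℝ, C = {x : ℝ | 0 ≤ Real.cos (w * x)}}

/-- The uniform (normalized Lebesgue) probability measure on `[0, 2π]`. -/
noncomputable def unifTwoPi : Measure ℝ :=
  (ENNReal.ofReal (2 * Real.pi))⁻¹ • (volume.restrict (Set.Icc (0 : ℝ) (2 * Real.pi)))

/-! ### Auxiliary development -/

open Real Set

/-- The Sontag concept with parameter `w`. -/
def SS (w : ℝ) : Set ℝ := {x : ℝ | 0 ≤ Real.cos (w * x)}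

lemma SS_mem_sontag (w : ℝ) : SS w ∈ sontag := ⟨w, rfl⟩

lemma SS_measurable (w : ℝ) : MeasurableSet (SS w) :=
  measurableSet_le measurable_const
    (Real.continuous_cos.comp (continuous_const.mul continuous_id)).measurable

lemma SS_per (r : ℕ) (x : ℝ) : x ∈ SS r ↔ x + 2 * π ∈ SS r := by
  simp only [SS, mem_setOf_eq]
  have : (r : ℝ) * (x + 2 * π) = r * x + (r : ℤ) * (2 * π) := by push_cast; ring
  rw [this, Real.cos_add_int_mul_two_pi]

lemma mem_SS_one_left {x : ℝ} (h0 : 0 ≤ x) (h1 : x ≤ π / 2) : x ∈ SS 1 := by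
  have := Real.cos_nonneg_of_mem_Icc (x := x) ⟨by linarith [Real.pi_pos], h1⟩
  simpa [SS] using this

lemma mem_SS_one_right {x : ℝ} (h0 : 3 * π / 2 ≤ x) (h1 : x ≤ 2 * π) : x ∈ SS 1 := by
  have := Real.cos_nonneg_of_mem_Icc (x := x - 2 * π)
    ⟨by linarith, by linarith [Real.pi_pos]⟩
  rw [Real.cos_sub_two_pi] at this
  simpa [SS] using this

lemma not_mem_SS_one_mid {x : ℝ} (h0 : π / 2 < x) (h1 : x < 3 * π / 2) : x ∉ SS 1 := by
  have := Real.cos_neg_of_pi_div_two_lt_of_lt h0 (by linarith)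
  simp [SS]; linarith

lemma SS_one_inter : SS 1 ∩ Ico 0 (2 * π) = Icc 0 (π / 2) ∪ Ico (3 * π / 2) (2 * π) := by
  ext x
  simp only [mem_inter_iff, mem_Ico, mem_Icc, mem_union]
  constructor
  · rintro ⟨hs, h0, h2⟩
    rcases le_or_gt x (π / 2) with h | h
    · exact Or.inl ⟨h0, h⟩
    · rcases le_or_gt (3 * π / 2) x with h' | h'
      · exact Or.inr ⟨h', h2⟩
      · exact absurd hs (not_mem_SS_one_mid h h')
  · rintro (⟨h0, h1⟩ | ⟨h0, h1⟩)
    · exact ⟨mem_SS_one_left h0 h1, h0, by linarith [Real.pi_pos]⟩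
    · exact ⟨mem_SS_one_right h0 h1.le, by linarith [Real.pi_pos], h1⟩

lemma vol_SS_one : volume (SS 1 ∩ Ico 0 (2 * π)) = ENNReal.ofReal π := by
  rw [SS_one_inter, measure_union ?_ measurableSet_Ico]
  · rw [Real.volume_Icc, Real.volume_Ico, ← ENNReal.ofReal_add (by linarith [Real.pi_pos])
      (by linarith [Real.pi_pos])]
    congr 1; ring
  · rw [Set.disjoint_left]
    intro x hx hx'
    have h1 : x ≤ π / 2 := hx.2
    have h2 : 3 * π / 2 ≤ x := hx'.1
    linarith [Real.pi_pos]

/-- Translation by `2π` preserves the measure of a `2π`-periodic set intersected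
with an interval. -/
lemma vol_shift (s : Set ℝ) (hper : ∀ x : ℝ, x ∈ s ↔ x + 2 * π ∈ s) (c d : ℝ) :
    volume (s ∩ Ico (c + 2 * π) (d + 2 * π)) = volume (s ∩ Ico c d) := by
  have he : s ∩ Ico (c + 2 * π) (d + 2 * π)
      = (fun x => -(2 * π) + x) ⁻¹' (s ∩ Ico c d) := by
    ext x
    simp only [mem_inter_iff, mem_preimage, mem_Ico]
    have hx := hper (-(2 * π) + x)
    rw [show -(2 * π) + x + 2 * π = x by ring] at hx
    constructor
    · rintro ⟨h1, h2, h3⟩; exact ⟨hx.mpr h1, by linarith, by linarith⟩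
    · rintro ⟨h1, h2, h3⟩; exact ⟨hx.mp h1, by linarith, by linarith⟩
  rw [he, measure_preimage_add]

lemma vol_shift_nat (s : Set ℝ) (hper : ∀ x : ℝ, x ∈ s ↔ x + 2 * π ∈ s) (k : ℕ)
    (c d : ℝ) :
    volume (s ∩ Ico (c + k * (2 * π)) (d + k * (2 * π))) = volume (s ∩ Ico c d) := by
  induction k with
  | zero => simp
  | succ k ih =>
      have := vol_shift s hper (c + k * (2 * π)) (d + k * (2 * π))
      rw [show c + (k + 1 : ℕ) * (2 * π) = c + k * (2 * π) + 2 * π by push_cast; ring,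
        show d + (k + 1 : ℕ) * (2 * π) = d + k * (2 * π) + 2 * π by push_cast; ring,
        this, ih]

lemma vol_periods (s : Set ℝ) (hs : MeasurableSet s)
    (hper : ∀ x : ℝ, x ∈ s ↔ x + 2 * π ∈ s) (k : ℕ) :
    volume (s ∩ Ico 0 (k * (2 * π))) = k * volume (s ∩ Ico 0 (2 * π)) := by
  induction k with
  | zero => simp
  | succ k ih =>
      have hle1 : (0 : ℝ) ≤ k * (2 * π) := by positivity
      have hle2 : (k : ℝ) * (2 * π) ≤ (k + 1 : ℕ) * (2 * π) := by
        push_cast; nlinarith [Real.pi_pos]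
      rw [← Set.Ico_union_Ico_eq_Ico hle1 hle2, Set.inter_union_distrib_left,
        measure_union ?_ (hs.inter measurableSet_Ico)]
      · have h2 : volume (s ∩ Ico ((k : ℝ) * (2 * π)) ((k + 1 : ℕ) * (2 * π)))
            = volume (s ∩ Ico 0 (2 * π)) := by
          have := vol_shift_nat s hper k 0 (2 * π)
          rw [show (0 : ℝ) + k * (2 * π) = k * (2 * π) by ring] at this
          rw [show ((k + 1 : ℕ) : ℝ) * (2 * π) = 2 * π + k * (2 * π) by push_cast; ring]
          exact this
        rw [ih, h2]
        push_cast
        ring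
      · exact Disjoint.mono inter_subset_right inter_subset_right
          (by rw [Set.disjoint_left]; rintro x ⟨_, h1⟩ ⟨h2, _⟩; linarith)

lemma vol_preimage_mul (a : ℝ) (ha : 0 < a) (s : Set ℝ) (hs : MeasurableSet s) :
    volume ((fun x => a * x) ⁻¹' s) = (ENNReal.ofReal a)⁻¹ * volume s := by
  have hmap := Real.map_volume_mul_left (ne_of_gt ha)
  have : volume ((fun x => a * x) ⁻¹' s) = Measure.map (fun x => a * x) volume s :=
    (Measure.map_apply (measurable_const_mul a) hs).symm
  rw [this, hmap, Measure.smul_apply, smul_eq_mul, abs_of_pos (inv_pos.mpr ha),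
    ENNReal.ofReal_inv_of_pos ha]

/-- Measure of `{x | cos (w x) ≥ 0}` over an interval whose endpoints are mapped by `w`
to multiples of `2π` is half the interval length. -/
lemma vol_SS_Ico (w : ℝ) (hw : 0 < w) (c d : ℝ) (k₁ k₂ : ℕ) (hk : k₁ ≤ k₂)
    (hc : w * c = k₁ * (2 * π)) (hd : w * d = k₂ * (2 * π)) :
    volume (SS w ∩ Ico c d) = ENNReal.ofReal ((d - c) / 2) := by
  have hpre : SS w ∩ Ico c d = (fun x => w * x) ⁻¹' (SS 1 ∩ Ico (w * c) (w * d)) := by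
    ext x
    simp only [mem_inter_iff, mem_preimage, mem_Ico, SS, mem_setOf_eq, one_mul]
    rw [mul_le_mul_iff_right₀ hw, mul_lt_mul_iff_right₀ hw]
  rw [hpre, vol_preimage_mul w hw _ ((SS_measurable 1).inter measurableSet_Ico)]
  have hper1 := SS_per 1
  simp only [Nat.cast_one] at hper1
  have hshift : volume (SS 1 ∩ Ico (w * c) (w * d))
      = volume (SS 1 ∩ Ico 0 (((k₂ - k₁ : ℕ) : ℝ) * (2 * π))) := by
    have := vol_shift_nat (SS 1) hper1 k₁ 0 (((k₂ - k₁ : ℕ) : ℝ) * (2 * π))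
    rw [show (0 : ℝ) + k₁ * (2 * π) = w * c by rw [hc]; ring,
      show ((k₂ - k₁ : ℕ) : ℝ) * (2 * π) + k₁ * (2 * π) = w * d by
        rw [hd, Nat.cast_sub hk]; ring] at this
    exact this
  rw [hshift, vol_periods (SS 1) (SS_measurable 1) hper1, vol_SS_one]
  have hj : ((k₂ - k₁ : ℕ) : ℝ) = (k₂ : ℝ) - k₁ := by rw [Nat.cast_sub hk]
  have harith : (d - c) / 2 = ((k₂ - k₁ : ℕ) : ℝ) * π / w := by
    have h1 : w * (d - c) = ((k₂ : ℝ) - k₁) * (2 * π) := by rw [mul_sub, hc, hd]; ring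
    rw [hj]
    field_simp
    nlinarith [h1]
  rw [harith, ← ENNReal.ofReal_natCast (k₂ - k₁), ← ENNReal.ofReal_mul (by positivity),
    ENNReal.ofReal_div_of_pos hw]
  rw [ENNReal.div_eq_inv_mul]

/-- For generic sets: measure over `Icc` equals measure over `Ico`. -/
lemma vol_inter_Icc_eq_Ico (s : Set ℝ) (a b : ℝ) :
    volume (s ∩ Icc a b) = volume (s ∩ Ico a b) := by
  apply le_antisymm
  · have hsub : s ∩ Icc a b ⊆ (s ∩ Ico a b) ∪ {b} := by
      rintro x ⟨hx, h1, h2⟩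
      rcases lt_or_eq_of_le h2 with h | h
      · exact Or.inl ⟨hx, h1, h⟩
      · exact Or.inr (by simp [h])
    calc volume (s ∩ Icc a b) ≤ volume ((s ∩ Ico a b) ∪ {b}) := measure_mono hsub
      _ ≤ volume (s ∩ Ico a b) + volume ({b} : Set ℝ) := measure_union_le _ _
      _ = volume (s ∩ Ico a b) := by simp
  · exact measure_mono (inter_subset_inter_right s Ico_subset_Icc_self)

/-- The symmetric difference `SS 1 Δ SS (4q)` has measure `π` in `[0, 2π)`. -/
lemma vol_symm_one (q : ℕ) (hq : 0 < q) :
    volume (symmDiff (SS 1) (SS ((4 * q : ℕ) : ℝ)) ∩ Ico 0 (2 * π)) = ENNReal.ofReal π := by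
  set r : ℕ := 4 * q with hr
  have hrpos : (0 : ℝ) < (r : ℝ) := by positivity
  have hpi := Real.pi_pos
  -- the three pieces
  have hBJ1 : volume (SS (r : ℝ) ∩ Ico 0 (π / 2)) = ENNReal.ofReal (π / 4) := by
    have := vol_SS_Ico (r : ℝ) hrpos 0 (π / 2) 0 q (Nat.zero_le q)
      (by ring) (by push_cast [hr]; ring)
    rw [this]; congr 1; ring
  have hBJ2 : volume (SS (r : ℝ) ∩ Ico (π / 2) (3 * π / 2)) = ENNReal.ofReal (π / 2) := by
    have := vol_SS_Ico (r : ℝ) hrpos (π / 2) (3 * π / 2) q (3 * q) (by omega)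
      (by push_cast [hr]; ring) (by push_cast [hr]; ring)
    rw [this]; congr 1; ring
  have hBJ3 : volume (SS (r : ℝ) ∩ Ico (3 * π / 2) (2 * π)) = ENNReal.ofReal (π / 4) := by
    have := vol_SS_Ico (r : ℝ) hrpos (3 * π / 2) (2 * π) (3 * q) (4 * q) (by omega)
      (by push_cast [hr]; ring) (by push_cast [hr]; ring)
    rw [this]; congr 1; ring
  set D : Set ℝ := symmDiff (SS 1) (SS (r : ℝ)) with hD
  have hDmeas : MeasurableSet D := (SS_measurable 1).symmDiff (SS_measurable (r : ℝ))
  -- piece 1 : D ∩ [0, π/2) = [0, π/2) \ SS r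
  have he1 : D ∩ Ico 0 (π / 2) = Ico 0 (π / 2) \ SS (r : ℝ) := by
    ext x
    simp only [hD, mem_inter_iff, Set.mem_symmDiff, mem_diff]
    constructor
    · rintro ⟨h, hx⟩
      rcases h with ⟨_, hns⟩ | ⟨_, hn1⟩
      · exact ⟨hx, hns⟩
      · exact absurd (mem_SS_one_left hx.1 (by linarith [hx.2])) hn1
    · rintro ⟨hx, hns⟩
      exact ⟨Or.inl ⟨mem_SS_one_left hx.1 (by linarith [hx.2]), hns⟩, hx⟩
  -- piece 3 : D ∩ [3π/2, 2π) = [3π/2, 2π) \ SS r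
  have he3 : D ∩ Ico (3 * π / 2) (2 * π) = Ico (3 * π / 2) (2 * π) \ SS (r : ℝ) := by
    ext x
    simp only [hD, mem_inter_iff, Set.mem_symmDiff, mem_diff]
    constructor
    · rintro ⟨h, hx⟩
      rcases h with ⟨_, hns⟩ | ⟨_, hn1⟩
      · exact ⟨hx, hns⟩
      · exact absurd (mem_SS_one_right hx.1 hx.2.le) hn1
    · rintro ⟨hx, hns⟩
      exact ⟨Or.inl ⟨mem_SS_one_right hx.1 hx.2.le, hns⟩, hx⟩
  have hv1 : volume (D ∩ Ico 0 (π / 2)) = ENNReal.ofReal (π / 4) := by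
    rw [he1, ← Set.diff_inter_self_eq_diff,
      measure_diff inter_subset_right
        (((SS_measurable (r : ℝ)).inter measurableSet_Ico).nullMeasurableSet)
        (by rw [hBJ1]; exact ENNReal.ofReal_ne_top),
      hBJ1, Real.volume_Ico, ← ENNReal.ofReal_sub _ (by positivity)]
    congr 1; ring
  have hv3 : volume (D ∩ Ico (3 * π / 2) (2 * π)) = ENNReal.ofReal (π / 4) := by
    rw [he3, ← Set.diff_inter_self_eq_diff,
      measure_diff inter_subset_right
        (((SS_measurable (r : ℝ)).inter measurableSet_Ico).nullMeasurableSet)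
        (by rw [hBJ3]; exact ENNReal.ofReal_ne_top),
      hBJ3, Real.volume_Ico, ← ENNReal.ofReal_sub _ (by positivity)]
    congr 1; ring
  -- piece 2 : squeeze
  have hv2 : volume (D ∩ Ico (π / 2) (3 * π / 2)) = ENNReal.ofReal (π / 2) := by
    have hsub1 : (SS (r : ℝ) ∩ Ico (π / 2) (3 * π / 2)) \ {π / 2}
        ⊆ D ∩ Ico (π / 2) (3 * π / 2) := by
      rintro x ⟨⟨hxr, hxI⟩, hxne⟩
      have hne : x ≠ π / 2 := by simpa using hxne
      have hx1 : x ∉ SS 1 := not_mem_SS_one_mid (lt_of_le_of_ne hxI.1 (Ne.symm hne)) hxI.2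
      exact ⟨Or.inr ⟨hxr, hx1⟩, hxI⟩
    have hsub2 : D ∩ Ico (π / 2) (3 * π / 2)
        ⊆ (SS (r : ℝ) ∩ Ico (π / 2) (3 * π / 2)) ∪ {π / 2} := by
      rintro x ⟨hxD, hxI⟩
      by_cases hne : x = π / 2
      · exact Or.inr (by simp [hne])
      · have hx1 : x ∉ SS 1 := not_mem_SS_one_mid (lt_of_le_of_ne hxI.1 (Ne.symm hne)) hxI.2
        rcases hxD with ⟨h1, _⟩ | ⟨hr', _⟩
        · exact absurd h1 hx1
        · exact Or.inl ⟨hr', hxI⟩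
    apply le_antisymm
    · calc volume (D ∩ Ico (π / 2) (3 * π / 2))
          ≤ volume ((SS (r : ℝ) ∩ Ico (π / 2) (3 * π / 2)) ∪ {π / 2}) := measure_mono hsub2
        _ ≤ volume (SS (r : ℝ) ∩ Ico (π / 2) (3 * π / 2)) + volume ({π / 2} : Set ℝ) :=
            measure_union_le _ _
        _ = ENNReal.ofReal (π / 2) := by rw [hBJ2]; simp
    · calc ENNReal.ofReal (π / 2) = volume (SS (r : ℝ) ∩ Ico (π / 2) (3 * π / 2)) := hBJ2.symm
        _ = volume ((SS (r : ℝ) ∩ Ico (π / 2) (3 * π / 2)) \ {π / 2}) :=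
            (measure_diff_null (by simp)).symm
        _ ≤ volume (D ∩ Ico (π / 2) (3 * π / 2)) := measure_mono hsub1
  -- assemble
  have hdecomp : Ico (0 : ℝ) (2 * π) = Ico 0 (π / 2) ∪ Ico (π / 2) (3 * π / 2)
      ∪ Ico (3 * π / 2) (2 * π) := by
    rw [Set.Ico_union_Ico_eq_Ico (by linarith) (by linarith),
      Set.Ico_union_Ico_eq_Ico (by linarith) (by linarith)]
  rw [hdecomp, Set.inter_union_distrib_left, Set.inter_union_distrib_left,
    measure_union ?_ (hDmeas.inter measurableSet_Ico),
    measure_union ?_ (hDmeas.inter measurableSet_Ico)]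
  · rw [hv1, hv2, hv3, ← ENNReal.ofReal_add (by positivity) (by positivity),
      ← ENNReal.ofReal_add (by positivity) (by positivity)]
    congr 1; ring
  · exact Disjoint.mono inter_subset_right inter_subset_right
      (by rw [Set.disjoint_left]; rintro x ⟨_, h1⟩ ⟨h2, _⟩; linarith)
  · rw [Set.disjoint_left]
    rintro x hx hx3
    have h3 : 3 * π / 2 ≤ x := hx3.2.1
    rcases hx with ⟨_, _, h1⟩ | ⟨_, _, h1⟩ <;> linarith

lemma vol_symm_pow (n m : ℕ) (h : n < m) :
    volume (symmDiff (SS ((4 : ℝ) ^ n)) (SS ((4 : ℝ) ^ m)) ∩ Ico 0 (2 * π))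
      = ENNReal.ofReal π := by
  have hpi := Real.pi_pos
  have hapos : (0:ℝ) < (4 : ℝ) ^ n := by positivity
  have hrq : ((4 * 4 ^ (m - n - 1) : ℕ) : ℝ) * (4:ℝ)^n = (4:ℝ)^m := by
    push_cast
    rw [← pow_succ', ← pow_add]
    congr 1
    omega
  have h1 : SS ((4 : ℝ) ^ n) = (fun x => (4:ℝ)^n * x) ⁻¹' SS 1 := by
    ext x; simp [SS]
  have h2 : SS ((4 : ℝ) ^ m) = (fun x => (4:ℝ)^n * x) ⁻¹' SS ((4 * 4 ^ (m - n - 1) : ℕ) : ℝ) := by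
    ext x
    simp only [SS, mem_preimage, mem_setOf_eq, ← mul_assoc, hrq]
  have h3 : Ico (0:ℝ) (2*π) = (fun x => (4:ℝ)^n * x) ⁻¹' Ico 0 (((4^n : ℕ):ℝ) * (2*π)) := by
    ext x
    simp only [mem_preimage, mem_Ico, Nat.cast_pow, Nat.cast_ofNat]
    constructor
    · rintro ⟨hx1, hx2⟩
      exact ⟨by positivity, by nlinarith⟩
    · rintro ⟨hx1, hx2⟩
      exact ⟨by nlinarith, by nlinarith⟩
  have hper : ∀ x : ℝ, x ∈ symmDiff (SS 1) (SS ((4 * 4 ^ (m - n - 1) : ℕ) : ℝ)) ↔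
      x + 2 * π ∈ symmDiff (SS 1) (SS ((4 * 4 ^ (m - n - 1) : ℕ) : ℝ)) := by
    intro x
    have ha := SS_per 1 x
    simp only [Nat.cast_one] at ha
    have hb := SS_per (4 * 4 ^ (m - n - 1)) x
    simp only [Set.mem_symmDiff]
    rw [ha, hb]
  have hDmeas : MeasurableSet (symmDiff (SS 1) (SS ((4 * 4 ^ (m - n - 1) : ℕ) : ℝ))) :=
    (SS_measurable 1).symmDiff (SS_measurable _)
  rw [h1, h2, h3, ← Set.preimage_symmDiff, ← Set.preimage_inter,
    vol_preimage_mul _ hapos _ (hDmeas.inter measurableSet_Ico),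
    vol_periods _ hDmeas hper (4 ^ n),
    vol_symm_one (4 ^ (m - n - 1)) (by positivity)]
  rw [← ENNReal.ofReal_natCast (4 ^ n), ← ENNReal.ofReal_mul (by positivity),
    ← ENNReal.ofReal_inv_of_pos hapos, ← ENNReal.ofReal_mul (by positivity)]
  congr 1
  push_cast
  field_simp

lemma unifTwoPi_apply (s : Set ℝ) :
    unifTwoPi s = (ENNReal.ofReal (2 * π))⁻¹ * volume (s ∩ Icc 0 (2 * π)) := by
  rw [unifTwoPi, Measure.smul_apply, smul_eq_mul, Measure.restrict_apply' measurableSet_Icc]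

lemma unif_symm {i j : ℕ} (hij : i < j) :
    unifTwoPi (symmDiff (SS ((4 : ℝ) ^ i)) (SS ((4 : ℝ) ^ j))) = ENNReal.ofReal (1 / 2) := by
  have hpi := Real.pi_pos
  rw [unifTwoPi_apply, vol_inter_Icc_eq_Ico, vol_symm_pow i j hij,
    ← ENNReal.ofReal_inv_of_pos (by positivity), ← ENNReal.ofReal_mul (by positivity)]
  congr 1
  field_simp

lemma unif_symm' {i j : ℕ} (hij : i ≠ j) :
    unifTwoPi (symmDiff (SS ((4 : ℝ) ^ i)) (SS ((4 : ℝ) ^ j))) = ENNReal.ofReal (1 / 2) := by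
  rcases hij.lt_or_gt with h | h
  · exact unif_symm h
  · rw [symmDiff_comm]; exact unif_symm h

instance : IsProbabilityMeasure unifTwoPi := by
  constructor
  have hpi := Real.pi_pos
  rw [unifTwoPi_apply, Set.univ_inter, Real.volume_Icc,
    show 2 * π - 0 = 2 * π by ring]
  exact ENNReal.inv_mul_cancel (by simp [ENNReal.ofReal_eq_zero]; linarith)
    ENNReal.ofReal_ne_top

lemma unif_ne_top (s : Set ℝ) : unifTwoPi s ≠ ⊤ :=
  (measure_lt_top unifTwoPi s).ne

/-- The triangle-inequality contradiction: a single set `A` cannot be `1/5`-close to two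
concepts at distance `1/2`. -/
lemma tri {A : Set ℝ} {i j : ℕ} (hij : i ≠ j)
    (h1 : (unifTwoPi (symmDiff A (SS ((4 : ℝ) ^ i)))).toReal ≤ 1 / 5)
    (h2 : (unifTwoPi (symmDiff A (SS ((4 : ℝ) ^ j)))).toReal ≤ 1 / 5) : False := by
  have htri := measure_symmDiff_le (μ := unifTwoPi) (SS ((4 : ℝ) ^ i)) A (SS ((4 : ℝ) ^ j))
  rw [unif_symm' hij, symmDiff_comm (SS ((4 : ℝ) ^ i)) A] at htri
  have hfin : unifTwoPi (symmDiff A (SS ((4 : ℝ) ^ i)))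
      + unifTwoPi (symmDiff A (SS ((4 : ℝ) ^ j))) ≠ ⊤ :=
    ENNReal.add_ne_top.mpr ⟨unif_ne_top _, unif_ne_top _⟩
  have h := ENNReal.toReal_mono hfin htri
  rw [ENNReal.toReal_ofReal (by norm_num),
    ENNReal.toReal_add (unif_ne_top _) (unif_ne_top _)] at h
  linarith

theorem stmt10 :
    (¬ ∀ ε : ℝ, 0 < ε → ∃ 𝒟 : Finset (Set ℝ), ∀ C ∈ sontag, ∃ D ∈ 𝒟,
        unifTwoPi (symmDiff C D) ≤ ENNReal.ofReal ε) ∧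
    ¬ ∃ (m : ℕ) (L : (Fin m → ℝ × Bool) → Set ℝ),
        (∀ s, MeasurableSet (L s)) ∧ IsPAC unifTwoPi sontag m L (1 / 5) (1 / 4) := by
  classical
  constructor
  · -- not totally bounded
    intro H
    obtain ⟨𝒟, h𝒟⟩ := H (1 / 5) (by norm_num)
    have hch : ∀ k : ℕ, ∃ D ∈ 𝒟, unifTwoPi (symmDiff (SS ((4 : ℝ) ^ k)) D)
        ≤ ENNReal.ofReal (1 / 5) := fun k => h𝒟 _ (SS_mem_sontag _)
    choose f hf1 hf2 using hch
    obtain ⟨i, -, j, -, hij, hfij⟩ :=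
      Set.infinite_univ.exists_ne_map_eq_of_mapsTo
        (f := f) (fun k _ => hf1 k) 𝒟.finite_toSet
    have h1 : (unifTwoPi (symmDiff (f i) (SS ((4 : ℝ) ^ i)))).toReal ≤ 1 / 5 := by
      apply ENNReal.toReal_le_of_le_ofReal (by norm_num)
      rw [symmDiff_comm]; exact hf2 i
    have h2 : (unifTwoPi (symmDiff (f i) (SS ((4 : ℝ) ^ j)))).toReal ≤ 1 / 5 := by
      apply ENNReal.toReal_le_of_le_ofReal (by norm_num)
      rw [symmDiff_comm, hfij]; exact hf2 j
    exact tri hij h1 h2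
  · -- not PAC learnable
    rintro ⟨m, L, -, hPAC⟩
    set ν : Measure (Fin m → ℝ) := prodMeas unifTwoPi m with hν
    haveI : IsProbabilityMeasure ν := by
      rw [hν, prodMeas]; infer_instance
    set K : ℕ := 2 ^ (m + 1) with hK
    set bad : Fin K → Set (Fin m → ℝ) := fun i =>
      {x | 1 / 5 < (unifTwoPi (symmDiff (L (labeled (SS ((4 : ℝ) ^ (i : ℕ))) x))
        (SS ((4 : ℝ) ^ (i : ℕ))))).toReal} with hbaddef
    have hbad : ∀ i, ν (bad i) ≤ ENNReal.ofReal (1 / 4) := fun i =>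
      hPAC _ (SS_mem_sontag _)
    set B : Fin K → Set (Fin m → ℝ) := fun i => toMeasurable ν (bad i) with hBdef
    have hBmeas : ∀ i, MeasurableSet (B i) := fun i => measurableSet_toMeasurable _ _
    have hBv : ∀ i, ν (B i) ≤ ENNReal.ofReal (1 / 4) := fun i => by
      rw [hBdef]; rw [measure_toMeasurable]; exact hbad i
    -- pointwise: at most 2^m indices are good
    have hgood : ∀ x : Fin m → ℝ,
        (Finset.univ.filter fun i : Fin K => x ∉ bad i).card ≤ 2 ^ m := by
      intro x
      have hinj : Set.InjOn (fun i : Fin K => fun j => (labeled (SS ((4 : ℝ) ^ (i : ℕ))) x j).2)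
          ((Finset.univ.filter fun i : Fin K => x ∉ bad i) : Set (Fin K)) := ?_
      · calc (Finset.univ.filter fun i : Fin K => x ∉ bad i).card
            ≤ (Finset.univ : Finset (Fin m → Bool)).card :=
              Finset.card_le_card_of_injOn _ (fun _ _ => Finset.mem_univ _) hinj
          _ = 2 ^ m := by simp [Fintype.card_fun]
      intro i hi i' hi' heq
      simp only [Finset.coe_filter, Set.mem_setOf_eq, Finset.mem_univ, true_and] at hi hi'
      by_contra hne
      have hlab : labeled (SS ((4 : ℝ) ^ (i : ℕ))) x = labeled (SS ((4 : ℝ) ^ (i' : ℕ))) x := by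
        funext j
        have hj := congrFun heq j
        simp only [labeled] at hj ⊢
        exact Prod.ext rfl hj
      have hii' : (i : ℕ) ≠ (i' : ℕ) := fun hc => hne (Fin.ext hc)
      apply tri hii'
      · exact le_of_not_gt (by simpa [hbaddef] using hi)
      · rw [hlab]
        exact le_of_not_gt (by simpa [hbaddef] using hi')
    -- hence at least K - 2^m = 2^m indices are bad, for every x
    have hcount : ∀ x : Fin m → ℝ, ((2 ^ m : ℕ) : ENNReal)
        ≤ ∑ i : Fin K, (B i).indicator (fun _ => (1 : ENNReal)) x := by
      intro x
      have hsum : ∑ i : Fin K, (B i).indicator (fun _ => (1 : ENNReal)) x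
          = ((Finset.univ.filter fun i : Fin K => x ∈ B i).card : ENNReal) := by
        rw [← Finset.sum_boole]
        exact Finset.sum_congr rfl (fun i _ => by simp [Set.indicator_apply])
      rw [hsum]
      have hsubset : (Finset.univ.filter fun i : Fin K => x ∈ bad i)
          ⊆ (Finset.univ.filter fun i : Fin K => x ∈ B i) := by
        intro i hi
        simp only [Finset.mem_filter, Finset.mem_univ, true_and] at hi ⊢
        exact subset_toMeasurable _ _ hi
      have hcards := Finset.card_filter_add_card_filter_not
        (s := (Finset.univ : Finset (Fin K))) (fun i => x ∈ bad i)
      have hKcard : (Finset.univ : Finset (Fin K)).card = 2 ^ (m + 1) := by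
        simp [hK]
      have h1 : 2 ^ m ≤ (Finset.univ.filter fun i : Fin K => x ∈ bad i).card := by
        have hg := hgood x
        have : (Finset.univ.filter fun i : Fin K => ¬ x ∈ bad i).card ≤ 2 ^ m := hg
        have hpow : 2 ^ (m + 1) = 2 ^ m + 2 ^ m := by ring
        omega
      exact_mod_cast h1.trans (Finset.card_le_card hsubset)
    -- integrate
    have hint : ((2 ^ m : ℕ) : ENNReal) ≤ (K : ENNReal) * ENNReal.ofReal (1 / 4) := by
      calc ((2 ^ m : ℕ) : ENNReal) = ∫⁻ _, ((2 ^ m : ℕ) : ENNReal) ∂ν := by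
            rw [lintegral_const, measure_univ, mul_one]
        _ ≤ ∫⁻ x, ∑ i : Fin K, (B i).indicator (fun _ => (1 : ENNReal)) x ∂ν :=
            lintegral_mono hcount
        _ = ∑ i : Fin K, ∫⁻ x, (B i).indicator (fun _ => (1 : ENNReal)) x ∂ν :=
            lintegral_finset_sum _ (fun i _ => measurable_const.indicator (hBmeas i))
        _ = ∑ i : Fin K, ν (B i) := by
            refine Finset.sum_congr rfl (fun i _ => ?_)
            exact lintegral_indicator_one (hBmeas i)
        _ ≤ ∑ i : Fin K, ENNReal.ofReal (1 / 4) := Finset.sum_le_sum (fun i _ => hBv i)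
        _ = (K : ENNReal) * ENNReal.ofReal (1 / 4) := by
            rw [Finset.sum_const, Finset.card_univ, Fintype.card_fin, nsmul_eq_mul]
    have hfin : ((K : ENNReal) * ENNReal.ofReal (1 / 4)) ≠ ⊤ :=
      ENNReal.mul_ne_top (ENNReal.natCast_ne_top K) ENNReal.ofReal_ne_top
    have := ENNReal.toReal_mono hfin hint
    rw [ENNReal.toReal_mul, ENNReal.toReal_natCast, ENNReal.toReal_natCast,
      ENNReal.toReal_ofReal (by norm_num)] at this
    have hKval : ((K : ℕ) : ℝ) = 2 * (2 ^ m : ℕ) := by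
      rw [hK]; push_cast; ring
    rw [hKval] at this
    have hpos : (0:ℝ) < ((2 ^ m : ℕ) : ℝ) := by positivity
    linarith
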